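/- The code C of Construction 1 has the d-optimal repair property whenever (d + 1 − k) divides n − k: let d be an integer with k ≤ d ≤ n − 1 and s' := d + 1 − k dividing r, and partition {0,…,r−1} into the r/s' consecutive blocks I_j = {(j−1)s',…,js'−1}. Then for every node index i ∈ {1,…,n} and every R ⊆ {1,…,n}∖{i} with |R| = d, any two codewords of C whose group sums ∑_{u∈I_j} c_{v,a(i,u)} agree for every v ∈ R, every block index j, and every digit string a, have equal i-th node. -/

import Mathlib

lemma vdm_zero_aux {F : Type*} [Field F] {ι : Type*} [Fintype ι] (w x : ι → F)
    (hw : Function.Injective w)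
    (h : ∀ t < Fintype.card ι, ∑ m, w m ^ t * x m = 0) : ∀ m, x m = 0 := by
  classical
  let e := Fintype.equivFin ι
  have hz : (fun q : Fin (Fintype.card ι) => x (e.symm q)) = 0 := by
    apply Matrix.eq_zero_of_forall_pow_sum_mul_pow_eq_zero
      (f := fun q : Fin (Fintype.card ι) => w (e.symm q))
    · intro q q' hq
      exact e.symm.injective (hw hq)
    · intro t
      have ht := h (t : ℕ) t.isLt
      calc ∑ j : Fin (Fintype.card ι), x (e.symm j) * w (e.symm j) ^ (t : ℕ)
          = ∑ m : ι, x m * w m ^ (t : ℕ) := Fintype.sum_equiv e.symm _ _ (fun _ => rfl)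
        _ = ∑ m : ι, w m ^ (t : ℕ) * x m := by simp [mul_comm]
        _ = 0 := ht
  intro m
  have := congrFun hz (e m)
  simpa using this

theorem construction1_d_optimal_repair_of_dvd
    (F : Type*) [Field F] (n r : ℕ) (hr : 1 ≤ r) (hrn : r < n)
    (lam : Fin n → Fin r → F)
    (hdist : Function.Injective fun p : Fin n × Fin r => lam p.1 p.2)
    (C C' : Fin n → (Fin n → Fin r) → F)
    (hC : ∀ t < r, ∀ a : Fin n → Fin r, ∑ i, lam i (a i) ^ t * C i a = 0)
    (hC' : ∀ t < r, ∀ a : Fin n → Fin r, ∑ i, lam i (a i) ^ t * C' i a = 0)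
    (d s' : ℕ) (hd1 : n - r ≤ d) (hd2 : d ≤ n - 1)
    (hs' : s' = d + 1 - (n - r)) (hdvd : s' ∣ r)
    (i : Fin n) (R : Finset (Fin n)) (hiR : i ∉ R) (hR : R.card = d)
    (hrep : ∀ v ∈ R, ∀ j < r / s', ∀ a : Fin n → Fin r,
      ∑ u ∈ Finset.univ.filter
          (fun u : Fin r => j * s' ≤ (u : ℕ) ∧ (u : ℕ) < (j + 1) * s'),
        C v (Function.update a i u) =
      ∑ u ∈ Finset.univ.filter
          (fun u : Fin r => j * s' ≤ (u : ℕ) ∧ (u : ℕ) < (j + 1) * s'),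
        C' v (Function.update a i u)) :
    C i = C' i := by
  classical
  have hs'pos : 0 < s' := by omega
  funext a
  -- the difference codeword
  set D : Fin n → (Fin n → Fin r) → F := fun v b => C v b - C' v b with hDdef
  have hD : ∀ t < r, ∀ b : Fin n → Fin r, ∑ v, lam v (b v) ^ t * D v b = 0 := by
    intro t ht b
    simp only [hDdef, mul_sub]
    rw [Finset.sum_sub_distrib, hC t ht b, hC' t ht b, sub_zero]
  -- the block containing `a i`
  set j : ℕ := (a i : ℕ) / s' with hjdef
  have hj : j < r / s' := Nat.div_lt_div_of_lt_of_dvd hdvd (a i).isLt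
  set B : Finset (Fin r) :=
    Finset.univ.filter (fun u : Fin r => j * s' ≤ (u : ℕ) ∧ (u : ℕ) < (j + 1) * s') with hBdef
  have hrepD : ∀ v ∈ R, ∑ u ∈ B, D v (Function.update a i u) = 0 := by
    intro v hv
    simp only [hDdef]
    rw [Finset.sum_sub_distrib, hrep v hv j hj a, sub_self]
  set T : Finset (Fin n) := Finset.univ \ insert i R with hTdef
  have hTne : ∀ v ∈ T, v ≠ i := by
    intro v hv
    simp only [hTdef, Finset.mem_sdiff, Finset.mem_insert] at hv
    tauto
  have hTcard : T.card = n - (d + 1) := by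
    rw [hTdef, Finset.card_sdiff_of_subset (Finset.subset_univ _),
      Finset.card_insert_of_notMem hiR, hR]
    simp
  have hBcard : B.card ≤ s' := by
    have hblen : (j + 1) * s' = j * s' + s' := by ring
    have := Finset.card_le_card_of_injOn (fun u : Fin r => (u : ℕ) - j * s')
      (s := B) (t := Finset.range s')
      (fun u hu => by
        rw [Finset.mem_coe, hBdef, Finset.mem_filter] at hu
        show (u : ℕ) - j * s' ∈ Finset.range s'
        rw [Finset.mem_range]
        omega)
      (fun u hu u' hu' h => by
        rw [Finset.mem_coe, hBdef, Finset.mem_filter] at hu hu'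
        replace h : (u : ℕ) - j * s' = (u' : ℕ) - j * s' := h
        exact Fin.ext (by omega))
    simpa using this
  have hcard : Fintype.card ({u : Fin r // u ∈ B} ⊕ {v : Fin n // v ∈ T}) ≤ r := by
    have hceq : Fintype.card ({u : Fin r // u ∈ B} ⊕ {v : Fin n // v ∈ T})
        = B.card + T.card := by simp
    omega
  set w : ({u : Fin r // u ∈ B} ⊕ {v : Fin n // v ∈ T}) → F :=
    Sum.elim (fun u => lam i u.1) (fun v => lam v.1 (a v.1)) with hwdef
  set x : ({u : Fin r // u ∈ B} ⊕ {v : Fin n // v ∈ T}) → F :=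
    Sum.elim (fun u => D i (Function.update a i u.1))
      (fun v => ∑ u ∈ B, D v.1 (Function.update a i u)) with hxdef
  have hw : Function.Injective w := by
    rintro (u | v) (u' | v') h <;> simp only [hwdef, Sum.elim_inl, Sum.elim_inr] at h
    · have h2 : ((i, u.1) : Fin n × Fin r) = (i, u'.1) := hdist h
      rw [Prod.mk.injEq] at h2
      exact congrArg Sum.inl (Subtype.ext h2.2)
    · have h2 : ((i, u.1) : Fin n × Fin r) = (v'.1, a v'.1) := hdist h
      rw [Prod.mk.injEq] at h2
      exact absurd h2.1.symm (hTne v'.1 v'.2)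
    · have h2 : ((v.1, a v.1) : Fin n × Fin r) = (i, u'.1) := hdist h
      rw [Prod.mk.injEq] at h2
      exact absurd h2.1 (hTne v.1 v.2)
    · have h2 : ((v.1, a v.1) : Fin n × Fin r) = (v'.1, a v'.1) := hdist h
      exact congrArg Sum.inr (Subtype.ext (congrArg Prod.fst h2))
  have hkey : ∀ t < r, ∑ m, w m ^ t * x m = 0 := by
    intro t ht
    have h1 : ∀ u ∈ B,
        lam i u ^ t * D i (Function.update a i u)
          + ∑ v ∈ R, lam v (a v) ^ t * D v (Function.update a i u)
          + ∑ v ∈ T, lam v (a v) ^ t * D v (Function.update a i u) = 0 := by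
      intro u hu
      have h0 := hD t ht (Function.update a i u)
      rw [← Finset.sum_erase_add _ _ (Finset.mem_univ i)] at h0
      have hsub : R ⊆ Finset.univ.erase i := fun v hv =>
        Finset.mem_erase.mpr ⟨fun hvi => hiR (by rw [← hvi]; exact hv), Finset.mem_univ v⟩
      have hTeq : Finset.univ.erase i \ R = T := by
        ext v
        simp only [hTdef, Finset.mem_sdiff, Finset.mem_erase, Finset.mem_univ,
          Finset.mem_insert, true_and, not_or]
        tauto
      rw [← Finset.sum_sdiff hsub, hTeq] at h0
      have eT : ∑ v ∈ T, lam v (Function.update a i u v) ^ t * D v (Function.update a i u)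
          = ∑ v ∈ T, lam v (a v) ^ t * D v (Function.update a i u) :=
        Finset.sum_congr rfl (fun v hv => by rw [Function.update_of_ne (hTne v hv)])
      have eR : ∑ v ∈ R, lam v (Function.update a i u v) ^ t * D v (Function.update a i u)
          = ∑ v ∈ R, lam v (a v) ^ t * D v (Function.update a i u) :=
        Finset.sum_congr rfl (fun v hv => by
          rw [Function.update_of_ne (fun hvi => hiR (by rw [← hvi]; exact hv))])
      rw [eT, eR, Function.update_self] at h0
      linear_combination h0
    have hsum : ∑ m, w m ^ t * x m
        = ∑ u ∈ B, lam i u ^ t * D i (Function.update a i u)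
          + ∑ v ∈ T, lam v (a v) ^ t * ∑ u ∈ B, D v (Function.update a i u) := by
      rw [Fintype.sum_sum_type]
      simp only [hwdef, hxdef, Sum.elim_inl, Sum.elim_inr]
      rw [Finset.sum_coe_sort B (fun u => lam i u ^ t * D i (Function.update a i u)),
        Finset.sum_coe_sort T
          (fun v => lam v (a v) ^ t * ∑ u ∈ B, D v (Function.update a i u))]
    have hR0 : ∑ v ∈ R, lam v (a v) ^ t * ∑ u ∈ B, D v (Function.update a i u) = 0 :=
      Finset.sum_eq_zero (fun v hv => by rw [hrepD v hv, mul_zero])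
    calc ∑ m, w m ^ t * x m
        = ∑ u ∈ B, lam i u ^ t * D i (Function.update a i u)
          + ∑ v ∈ T, lam v (a v) ^ t * ∑ u ∈ B, D v (Function.update a i u) := hsum
      _ = ∑ u ∈ B, lam i u ^ t * D i (Function.update a i u)
          + (∑ v ∈ R, lam v (a v) ^ t * ∑ u ∈ B, D v (Function.update a i u))
          + ∑ v ∈ T, lam v (a v) ^ t * ∑ u ∈ B, D v (Function.update a i u) := by
            rw [hR0]; ring
      _ = ∑ u ∈ B, (lam i u ^ t * D i (Function.update a i u)
          + ∑ v ∈ R, lam v (a v) ^ t * D v (Function.update a i u)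
          + ∑ v ∈ T, lam v (a v) ^ t * D v (Function.update a i u)) := by
            rw [Finset.sum_add_distrib, Finset.sum_add_distrib]
            congr 1
            · congr 1
              simp_rw [Finset.mul_sum]
              rw [Finset.sum_comm]
            · simp_rw [Finset.mul_sum]
              rw [Finset.sum_comm]
      _ = 0 := Finset.sum_eq_zero h1
  have hx := vdm_zero_aux w x hw (fun t ht' => hkey t (lt_of_lt_of_le ht' hcard))
  have hmemB : a i ∈ B := by
    rw [hBdef, Finset.mem_filter]
    refine ⟨Finset.mem_univ _, Nat.div_mul_le_self _ _, ?_⟩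
    rw [add_mul, one_mul]
    exact Nat.lt_div_mul_add hs'pos
  have := hx (Sum.inl ⟨a i, hmemB⟩)
  simp only [hxdef, Sum.elim_inl, Function.update_eq_self, hDdef, sub_eq_zero] at this
  exact this
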